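/- Fix k ≥ 2. Let L : C[0,π] → C[0,π] be a continuous linear operator with L(C₀[0,π]) ⊆ C₀[0,π], and let η ∈ SO(k+1). If η(1^k) = 1^k, then T_η ∘ L^# ∘ T_{η^{-1}} = L^# as operators on C(S^k); if η(1^k) = −1^k, then T_η ∘ L^# ∘ T_{η^{-1}} = ρ^# ∘ L^# ∘ ρ^# as operators on C(S^k). -/

import Mathlib

open MeasureTheory Matrix Metric Real
open scoped RealInnerProductSpace ENNReal
noncomputable section

abbrev Eucl (d : ℕ) : Type := EuclideanSpace ℝ (Fin d)
abbrev Sph (d : ℕ) := Metric.sphere (0 : Eucl d) 1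

/-- The north pole `1^k = (0,…,0,1)` of the sphere `S^k ⊆ ℝ^{k+1}`. -/
def npole (m : ℕ) : Sph (m + 1) :=
  ⟨EuclideanSpace.single (Fin.last m) (1 : ℝ), by simp⟩

/-- The south pole `-1^k = (0,…,0,-1)`. -/
def spole (m : ℕ) : Sph (m + 1) :=
  ⟨EuclideanSpace.single (Fin.last m) (-1 : ℝ), by simp⟩

lemma sphere_sum_sq {d : ℕ} (y : Sph d) : ∑ i : Fin d, (y.1 i) ^ 2 = 1 := by
  have hy : ‖y.1‖ = 1 := by simpa using y.2
  rw [EuclideanSpace.norm_eq] at hy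
  have h' : Real.sqrt (∑ i, ‖y.1 i‖ ^ 2) ^ 2 = 1 := by rw [hy]; norm_num
  rw [Real.sq_sqrt (by positivity)] at h'
  simpa [Real.norm_eq_abs, sq_abs] using h'

lemma phi_mem {m : ℕ} (t : ℝ) (y : Sph (m + 1)) :
    (WithLp.equiv 2 (Fin (m + 2) → ℝ)).symm
      (Fin.snoc (fun i => Real.sin t * ((WithLp.equiv 2 (Fin (m + 1) → ℝ)) y.1) i) (Real.cos t))
      ∈ Metric.sphere (0 : Eucl (m + 2)) 1 := by
  rw [mem_sphere_iff_norm, sub_zero, EuclideanSpace.norm_eq]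
  have hw : (∑ i : Fin (m + 2),
      ‖(WithLp.equiv 2 (Fin (m + 2) → ℝ)).symm
        (Fin.snoc (fun i => Real.sin t * ((WithLp.equiv 2 (Fin (m + 1) → ℝ)) y.1) i)
          (Real.cos t)) i‖ ^ 2) = 1 := by
    simp only [WithLp.equiv_symm_apply, PiLp.toLp_apply, Real.norm_eq_abs, sq_abs]
    rw [Fin.sum_univ_castSucc]
    simp only [Fin.snoc_castSucc, Fin.snoc_last]
    have hmul : (∑ i : Fin (m + 1),
        (Real.sin t * ((WithLp.equiv 2 (Fin (m + 1) → ℝ)) y.1) i) ^ 2)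
        = Real.sin t ^ 2 * ∑ i : Fin (m + 1), (y.1 i) ^ 2 := by
      rw [Finset.mul_sum]
      refine Finset.sum_congr rfl fun i _ => ?_
      have : ((WithLp.equiv 2 (Fin (m + 1) → ℝ)) y.1) i = y.1 i := rfl
      rw [this]; ring
    rw [hmul, sphere_sum_sq, mul_one]
    exact Real.sin_sq_add_cos_sq t
  rw [hw]
  exact Real.sqrt_one

/-- The map `Φ_k(t, y) = (y sin t, cos t)` from `ℝ × S^{k-1}` to `S^k`. -/
def phi {m : ℕ} (t : ℝ) (y : Sph (m + 1)) : Sph (m + 2) :=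
  ⟨(WithLp.equiv 2 (Fin (m + 2) → ℝ)).symm
      (Fin.snoc (fun i => Real.sin t * ((WithLp.equiv 2 (Fin (m + 1) → ℝ)) y.1) i) (Real.cos t)),
    phi_mem t y⟩

/-- The latitude `t ∈ [0,π]` of a point on `S^k`, i.e. `arccos` of the last coordinate. -/
def lat {m : ℕ} (ξ : Sph (m + 2)) : ℝ := Real.arccos (ξ.1 (Fin.last (m + 1)))

lemma lat_mem_Icc {m : ℕ} (ξ : Sph (m + 2)) : lat ξ ∈ Set.Icc (0 : ℝ) π :=
  ⟨Real.arccos_nonneg _, Real.arccos_le_pi _⟩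

/-- The "equatorial part" of a point of `S^k`: its first `k` coordinates. -/
def eqpart {m : ℕ} (ξ : Sph (m + 2)) : Eucl (m + 1) :=
  (WithLp.equiv 2 (Fin (m + 1) → ℝ)).symm (fun i => ξ.1 i.castSucc)

open scoped Classical in
/-- The longitudinal direction of a point of `S^k`, an element of `S^{k-1}`; at the poles it is
(by convention) the north pole `1^{k-1}` of `S^{k-1}`. -/
def ydir {m : ℕ} (ξ : Sph (m + 2)) : Sph (m + 1) :=
  if h : eqpart ξ = 0 then npole m
  else ⟨‖eqpart ξ‖⁻¹ • eqpart ξ, by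
    rw [mem_sphere_iff_norm, sub_zero, norm_smul, norm_inv, norm_norm,
      inv_mul_cancel₀ (norm_ne_zero_iff.mpr h)]⟩

lemma continuous_phi_left {m : ℕ} (y : Sph (m + 1)) :
    Continuous fun t : ℝ => (phi t y : Sph (m + 2)) := by
  apply Continuous.subtype_mk
  refine (PiLp.continuous_toLp 2 (fun _ : Fin (m + 2) => ℝ)).comp ?_
  apply continuous_pi
  intro j
  refine Fin.lastCases ?_ ?_ j
  · simpa [Fin.snoc_last] using Real.continuous_cos
  · intro i
    simp only [Fin.snoc_castSucc]
    exact Real.continuous_sin.mul continuous_const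

lemma continuous_phi_right {m : ℕ} (t : ℝ) :
    Continuous fun y : Sph (m + 1) => (phi t y : Sph (m + 2)) := by
  apply Continuous.subtype_mk
  refine (PiLp.continuous_toLp 2 (fun _ : Fin (m + 2) => ℝ)).comp ?_
  apply continuous_pi
  intro j
  refine Fin.lastCases ?_ ?_ j
  · simpa [Fin.snoc_last] using continuous_const (y := Real.cos t)
  · intro i
    simp only [Fin.snoc_castSucc]
    exact continuous_const.mul
      ((continuous_apply i).comp ((PiLp.continuous_ofLp 2 (fun _ : Fin (m + 1) => ℝ)).comp
        continuous_subtype_val))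

/-- The interval `[0,π]`. -/
abbrev IccPi : Set ℝ := Set.Icc (0 : ℝ) π

/-- `0` as an element of `[0,π]`. -/
def loPt : IccPi := ⟨0, Set.left_mem_Icc.mpr Real.pi_nonneg⟩

/-- `π` as an element of `[0,π]`. -/
def hiPt : IccPi := ⟨π, Set.right_mem_Icc.mpr Real.pi_nonneg⟩

/-- The slice of a continuous function on `S^k` along the meridian through `y ∈ S^{k-1}`:
`t ↦ f(Φ_k(t,y))` as an element of `C[0,π]`. -/
def merid {m : ℕ} (f : C(Sph (m + 2), ℝ)) (y : Sph (m + 1)) : C(IccPi, ℝ) :=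
  ⟨fun t => f (phi t.1 y), by
    exact f.continuous.comp ((continuous_phi_left y).comp continuous_subtype_val)⟩

/-- The latitudinal operator `L^#` acting on continuous functions on `S^k`. -/
def latOp {m : ℕ} (L : C(IccPi, ℝ) →L[ℝ] C(IccPi, ℝ)) (f : C(Sph (m + 2), ℝ))
    (ξ : Sph (m + 2)) : ℝ :=
  L (merid f (ydir ξ)) ⟨lat ξ, lat_mem_Icc ξ⟩

/-- The reflection `t ↦ π - t` of `[0,π]`. -/
def reflI : C(IccPi, IccPi) :=
  ⟨fun t => ⟨π - t.1, ⟨by linarith [t.2.2], by linarith [t.2.1]⟩⟩,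
    Continuous.subtype_mk (continuous_const.sub continuous_subtype_val) _⟩

/-- The reflection operator `ρ g(t) = g(π - t)` on `C[0,π]`. -/
def reflOp : C(IccPi, ℝ) →L[ℝ] C(IccPi, ℝ) where
  toFun g := g.comp reflI
  map_add' g h := rfl
  map_smul' c g := rfl
  cont := ContinuousMap.continuous_precomp reflI

/-- The reflection of the sphere `S^k` changing the sign of the last coordinate. -/
def reflSph {m : ℕ} (ξ : Sph (m + 2)) : Sph (m + 2) :=
  ⟨(WithLp.equiv 2 (Fin (m + 2) → ℝ)).symm
      (Fin.snoc (fun i => ξ.1 i.castSucc) (-(ξ.1 (Fin.last (m + 1))))), by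
    rw [mem_sphere_iff_norm, sub_zero, EuclideanSpace.norm_eq]
    have hw : (∑ i : Fin (m + 2),
        ‖(WithLp.equiv 2 (Fin (m + 2) → ℝ)).symm
          (Fin.snoc (fun i => ξ.1 i.castSucc) (-(ξ.1 (Fin.last (m + 1))))) i‖ ^ 2) = 1 := by
      simp only [WithLp.equiv_symm_apply, PiLp.toLp_apply, Real.norm_eq_abs, sq_abs]
      rw [Fin.sum_univ_castSucc]
      simp only [Fin.snoc_castSucc, Fin.snoc_last, neg_sq]
      have h := sphere_sum_sq ξ
      rw [Fin.sum_univ_castSucc] at h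
      exact h
    rw [hw]
    exact Real.sqrt_one⟩

lemma continuous_reflSph {m : ℕ} : Continuous (reflSph (m := m)) := by
  apply Continuous.subtype_mk
  refine (PiLp.continuous_toLp 2 (fun _ : Fin (m + 2) => ℝ)).comp ?_
  apply continuous_pi
  intro j
  refine Fin.lastCases ?_ ?_ j
  · simp only [Fin.snoc_last]
    exact ((continuous_apply (Fin.last (m + 1))).comp
      ((PiLp.continuous_ofLp 2 (fun _ : Fin (m + 2) => ℝ)).comp continuous_subtype_val)).neg
  · intro i
    simp only [Fin.snoc_castSucc]
    exact (continuous_apply i.castSucc).comp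
      ((PiLp.continuous_ofLp 2 (fun _ : Fin (m + 2) => ℝ)).comp continuous_subtype_val)

/-- The reflection `ρ^#` as a continuous self-map of `S^k`. -/
def reflSphCM {m : ℕ} : C(Sph (m + 2), Sph (m + 2)) := ⟨reflSph, continuous_reflSph⟩

instance (d : ℕ) : MeasurableSpace (Matrix (Fin d) (Fin d) ℝ) :=
  inferInstanceAs (MeasurableSpace (Fin d → Fin d → ℝ))

/-- The special orthogonal group `SO(d)` as a subgroup of the orthogonal group. -/
def SOsub (d : ℕ) : Subgroup ↥(Matrix.orthogonalGroup (Fin d) ℝ) where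
  carrier := {A | Matrix.det (A : Matrix (Fin d) (Fin d) ℝ) = 1}
  one_mem' := by simp
  mul_mem' := by
    intro a b ha hb
    simp only [Set.mem_setOf_eq] at *
    rw [Matrix.UnitaryGroup.mul_val, Matrix.det_mul, ha, hb, mul_one]
  inv_mem' := by
    intro a ha
    simp only [Set.mem_setOf_eq] at *
    rw [Matrix.UnitaryGroup.inv_val, Matrix.star_eq_conjTranspose,
      show ((a : Matrix (Fin d) (Fin d) ℝ))ᴴ = (a : Matrix (Fin d) (Fin d) ℝ)ᵀ from rfl,
      Matrix.det_transpose, ha]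

/-- The special orthogonal group `SO(d)`. -/
abbrev SOg (d : ℕ) := ↥(SOsub d)

/-- The matrix of an element of `SO(d)`. -/
abbrev SOg.mat {d : ℕ} (b : SOg d) : Matrix (Fin d) (Fin d) ℝ :=
  ((b : ↥(Matrix.orthogonalGroup (Fin d) ℝ)) : Matrix (Fin d) (Fin d) ℝ)

lemma SOg.matT_mul {d : ℕ} (b : SOg d) : b.matᵀ * b.mat = 1 := by
  have h := (b : ↥(Matrix.orthogonalGroup (Fin d) ℝ)).2.1
  simpa [Matrix.star_eq_conjTranspose] using h

lemma mulVec_mem_sphere {d : ℕ} (b : SOg d) (x : Sph d) :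
    (WithLp.equiv 2 (Fin d → ℝ)).symm (b.mat.mulVec ((WithLp.equiv 2 (Fin d → ℝ)) x.1)) ∈
      Metric.sphere (0 : Eucl d) 1 := by
  have hx : ‖x.1‖ = 1 := by simpa using x.2
  rw [mem_sphere_iff_norm, sub_zero]
  have key : ∀ w : Eucl d,
      ‖w‖ ^ 2 = (WithLp.equiv 2 (Fin d → ℝ)) w ⬝ᵥ (WithLp.equiv 2 (Fin d → ℝ)) w := by
    intro w
    rw [EuclideanSpace.norm_eq, Real.sq_sqrt (by positivity)]
    simp [dotProduct, sq_abs, pow_two]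
  set v : Fin d → ℝ := (WithLp.equiv 2 (Fin d → ℝ)) x.1 with hv
  have hdot : (b.mat.mulVec v) ⬝ᵥ (b.mat.mulVec v) = v ⬝ᵥ v := by
    rw [Matrix.dotProduct_mulVec, ← Matrix.mulVec_transpose, Matrix.mulVec_mulVec, SOg.matT_mul,
      Matrix.one_mulVec]
  have h1 : ‖(WithLp.equiv 2 (Fin d → ℝ)).symm (b.mat.mulVec v)‖ ^ 2 = (1 : ℝ) := by
    rw [key, Equiv.apply_symm_apply, hdot, ← key, hx, one_pow]
  nlinarith [norm_nonneg ((WithLp.equiv 2 (Fin d → ℝ)).symm (b.mat.mulVec v))]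

/-- The rotation action of `SO(d)` on the sphere `S^{d-1}`. -/
def rot {d : ℕ} (b : SOg d) (x : Sph d) : Sph d :=
  ⟨(WithLp.equiv 2 (Fin d → ℝ)).symm (b.mat.mulVec ((WithLp.equiv 2 (Fin d → ℝ)) x.1)),
    mulVec_mem_sphere b x⟩

lemma continuous_rot {d : ℕ} (b : SOg d) : Continuous (rot b) := by
  apply Continuous.subtype_mk
  refine (PiLp.continuous_toLp 2 (fun _ : Fin d => ℝ)).comp ?_
  have : Continuous fun v : Fin d → ℝ => b.mat.mulVec v :=
    b.mat.mulVecLin.continuous_of_finiteDimensional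
  exact this.comp ((PiLp.continuous_ofLp 2 (fun _ : Fin d => ℝ)).comp continuous_subtype_val)

/-- Rotation as a continuous self-map of the sphere. -/
def rotCM {d : ℕ} (b : SOg d) : C(Sph d, Sph d) := ⟨rot b, continuous_rot b⟩

/-- The rotation operator `T_b f = f ∘ b⁻¹` on continuous functions on the sphere. -/
def Trot {d : ℕ} (b : SOg d) (f : C(Sph d, ℝ)) : C(Sph d, ℝ) := f.comp (rotCM b⁻¹)

/-- The rotation operator `T_b` on `L²` of the sphere. -/
def TrotL2 {d : ℕ} (σ : Measure (Sph d)) (hσ : ∀ b : SOg d, MeasurePreserving (rot b) σ σ)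
    (b : SOg d) : Lp ℝ 2 σ →L[ℝ] Lp ℝ 2 σ :=
  (Lp.compMeasurePreservingₗᵢ ℝ (rot b⁻¹) (hσ b⁻¹)).toContinuousLinearMap

/-- The latitude-`t` circle slice of a continuous function on `S^k`:
`y ↦ f(Φ_k(t,y))` as an element of `C(S^{k-1}, ℝ)`. -/
def ringSlice {m : ℕ} (f : C(Sph (m + 2), ℝ)) (t : ℝ) : C(Sph (m + 1), ℝ) :=
  ⟨fun y => f (phi t y), f.continuous.comp (continuous_phi_right t)⟩

open scoped Classical in
/-- The lifted operator `P̂` acting on functions on `S^k` (with value `0` at the poles,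
and defined via the latitude/longitude decomposition elsewhere). -/
def hatOp {m : ℕ} (P : C(Sph (m + 1), ℝ) →L[ℝ] C(Sph (m + 1), ℝ)) (g : Sph (m + 2) → ℝ)
    (ξ : Sph (m + 2)) : ℝ :=
  if ξ = npole (m + 1) ∨ ξ = spole (m + 1) then 0
  else if h : Continuous g then P (ringSlice ⟨g, h⟩ (lat ξ)) (ydir ξ) else 0

/-- The spherical coordinates `Ψ_n : ℝ^n → S^n` given recursively by `Ψ_1(t) = (sin t, cos t)`
and `Ψ_{n+1}(v, t) = (Ψ_n(v) sin t, cos t)`. -/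
def Psi : (n : ℕ) → (Fin n → ℝ) → Sph (n + 1)
  | 0, _ => npole 0
  | n + 1, v => phi (v (Fin.last n)) (Psi n (fun i => v i.castSucc))

/-- The patch `Ψ_n([a 0, b 0] × ⋯ × [a (n-1), b (n-1)]) ⊆ S^n`. -/
def patchSet (n : ℕ) (a b : Fin n → ℝ) : Set (Sph (n + 1)) :=
  Psi n '' {v | ∀ j, v j ∈ Set.Icc (a j) (b j)}

section Aux
variable {m : ℕ}

lemma phi_cast (t : ℝ) (y : Sph (m+1)) (i : Fin (m+1)) :
    (phi t y).1 i.castSucc = Real.sin t * y.1 i := by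
  simp only [phi, WithLp.equiv_symm_apply, PiLp.toLp_apply, Fin.snoc_castSucc]
  rfl

lemma phi_last (t : ℝ) (y : Sph (m+1)) :
    (phi t y).1 (Fin.last (m+1)) = Real.cos t := by
  simp only [phi, WithLp.equiv_symm_apply, PiLp.toLp_apply, Fin.snoc_last]

lemma refl_cast (ξ : Sph (m+2)) (i : Fin (m+1)) :
    (reflSph ξ).1 i.castSucc = ξ.1 i.castSucc := by
  simp only [reflSph, WithLp.equiv_symm_apply, PiLp.toLp_apply, Fin.snoc_castSucc]

lemma refl_last (ξ : Sph (m+2)) :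
    (reflSph ξ).1 (Fin.last (m+1)) = -ξ.1 (Fin.last (m+1)) := by
  simp only [reflSph, WithLp.equiv_symm_apply, PiLp.toLp_apply, Fin.snoc_last]

lemma npole_coord (j : Fin (m+1)) :
    (npole m).1 j = if j = Fin.last m then 1 else 0 := by
  show EuclideanSpace.single (Fin.last m) (1:ℝ) j = _
  rw [EuclideanSpace.single_apply]

lemma spole_coord (j : Fin (m+1)) :
    (spole m).1 j = if j = Fin.last m then -1 else 0 := by
  show EuclideanSpace.single (Fin.last m) (-1:ℝ) j = _
  rw [EuclideanSpace.single_apply]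

lemma spole_val : (spole m).1 = -(npole m).1 := by
  refine WithLp.ofLp_injective 2 (funext fun j => ?_)
  rw [WithLp.ofLp_neg, Pi.neg_apply, npole_coord, spole_coord]
  split <;> simp

lemma npole_val : (npole m).1.ofLp = Pi.single (Fin.last m) 1 := by
  funext j
  rw [npole_coord, Pi.single_apply]

lemma phi_zero (y : Sph (m+1)) : phi 0 y = npole (m+1) := by
  refine Subtype.ext (WithLp.ofLp_injective 2 (funext fun j => ?_))
  refine Fin.lastCases ?_ (fun i => ?_) j
  · rw [phi_last, npole_coord, if_pos rfl, Real.cos_zero]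
  · rw [phi_cast, npole_coord, if_neg (Fin.castSucc_lt_last i).ne, Real.sin_zero, zero_mul]

lemma phi_pi (y : Sph (m+1)) : phi π y = spole (m+1) := by
  refine Subtype.ext (WithLp.ofLp_injective 2 (funext fun j => ?_))
  refine Fin.lastCases ?_ (fun i => ?_) j
  · rw [phi_last, spole_coord, if_pos rfl, Real.cos_pi]
  · rw [phi_cast, spole_coord, if_neg (Fin.castSucc_lt_last i).ne, Real.sin_pi, zero_mul]

lemma refl_npole : reflSph (npole (m+1)) = spole (m+1) := by
  refine Subtype.ext (WithLp.ofLp_injective 2 (funext fun j => ?_))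
  refine Fin.lastCases ?_ (fun i => ?_) j
  · rw [refl_last, npole_coord, spole_coord]; simp
  · rw [refl_cast, npole_coord, spole_coord]
    simp [(Fin.castSucc_lt_last i).ne]

lemma refl_spole : reflSph (spole (m+1)) = npole (m+1) := by
  refine Subtype.ext (WithLp.ofLp_injective 2 (funext fun j => ?_))
  refine Fin.lastCases ?_ (fun i => ?_) j
  · rw [refl_last, npole_coord, spole_coord]; simp
  · rw [refl_cast, npole_coord, spole_coord]
    simp [(Fin.castSucc_lt_last i).ne]

lemma rot_val {d : ℕ} (b : SOg d) (x : Sph d) : (rot b x).1 = b.mat.mulVec x.1 := rfl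

lemma inv_mat {d : ℕ} (b : SOg d) : (b⁻¹).mat = b.matᵀ := by
  simp only [SOg.mat]
  rfl

lemma mat_mul_matT {d : ℕ} (b : SOg d) : b.mat * b.matᵀ = 1 :=
  mul_eq_one_comm.mpr (SOg.matT_mul b)

lemma rot_rot_inv {d : ℕ} (b : SOg d) (x : Sph d) : rot b (rot b⁻¹ x) = x := by
  refine Subtype.ext (WithLp.ofLp_injective 2 ?_)
  rw [rot_val, rot_val, inv_mat, Matrix.mulVec_mulVec, mat_mul_matT, Matrix.one_mulVec]

lemma rot_neg_val {d : ℕ} (b : SOg d) (x x' : Sph d) (h : x'.1 = -x.1) :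
    (rot b x').1 = -(rot b x).1 := by
  refine WithLp.ofLp_injective 2 ?_
  rw [WithLp.ofLp_neg, rot_val, rot_val, h, WithLp.ofLp_neg, Matrix.mulVec_neg]

lemma eqpart_apply (ξ : Sph (m+2)) (i : Fin (m+1)) : eqpart ξ i = ξ.1 i.castSucc := rfl

lemma norm_eqpart_sq (ξ : Sph (m+2)) :
    ‖eqpart ξ‖ ^ 2 = 1 - (ξ.1 (Fin.last (m+1))) ^ 2 := by
  rw [EuclideanSpace.norm_eq, Real.sq_sqrt (by positivity)]
  have h := sphere_sum_sq ξ
  rw [Fin.sum_univ_castSucc] at h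
  have : ∑ i : Fin (m+1), ‖eqpart ξ i‖ ^ 2 = ∑ i : Fin (m+1), (ξ.1 i.castSucc) ^ 2 := by
    refine Finset.sum_congr rfl fun i _ => ?_
    rw [eqpart_apply, Real.norm_eq_abs, sq_abs]
  rw [this]
  linarith

lemma eqpart_refl (ξ : Sph (m+2)) : eqpart (reflSph ξ) = eqpart ξ := by
  refine WithLp.ofLp_injective 2 (funext fun i => ?_)
  rw [eqpart_apply, eqpart_apply, refl_cast]

lemma ydir_apply (ξ : Sph (m+2)) (h : eqpart ξ ≠ 0) (l : Fin (m+1)) :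
    (ydir ξ).1 l = ‖eqpart ξ‖⁻¹ • eqpart ξ l := by
  simp only [ydir, dif_neg h]
  rfl

lemma ydir_congr (a b : Sph (m+2)) (h : eqpart a = eqpart b) : ydir a = ydir b := by
  unfold ydir
  by_cases h0 : eqpart b = 0
  · rw [dif_pos (by rw [h]; exact h0), dif_pos h0]
  · rw [dif_neg (by rw [h]; exact h0), dif_neg h0]
    refine Subtype.ext ?_
    show ‖eqpart a‖⁻¹ • eqpart a = ‖eqpart b‖⁻¹ • eqpart b
    rw [h]

lemma col_of (η : SOg (m+2)) (ε : ℝ)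
    (h : (rot η (npole (m+1))).1 = ε • (npole (m+1)).1) (i : Fin (m+2)) :
    η.mat i (Fin.last (m+1)) = if i = Fin.last (m+1) then ε else 0 := by
  have h2 := congrFun (congrArg WithLp.ofLp h) i
  rw [WithLp.ofLp_smul, rot_val, npole_val, Matrix.mulVec_single_one] at h2
  rw [Pi.smul_apply, Pi.single_apply, smul_eq_mul] at h2
  simp only [mul_one, Matrix.col_apply] at h2
  rw [h2]; split <;> ring

lemma row_of (η : SOg (m+2)) (ε : ℝ)
    (hcol : ∀ i, η.mat i (Fin.last (m+1)) = if i = Fin.last (m+1) then ε else 0)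
    (hε : ε * ε = 1) (j : Fin (m+2)) :
    η.mat (Fin.last (m+1)) j = if j = Fin.last (m+1) then ε else 0 := by
  have h := congrFun (congrFun (SOg.matT_mul η) (Fin.last (m+1))) j
  rw [Matrix.mul_apply] at h
  have hs : ∑ i, η.matᵀ (Fin.last (m+1)) i * η.mat i j = ε * η.mat (Fin.last (m+1)) j := by
    rw [Finset.sum_eq_single (Fin.last (m+1))]
    · rw [Matrix.transpose_apply, hcol, if_pos rfl]
    · intro b _ hb
      rw [Matrix.transpose_apply, hcol, if_neg hb, zero_mul]
    · intro hmem; exact absurd (Finset.mem_univ _) hmem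
  rw [hs, Matrix.one_apply] at h
  have h3 : η.mat (Fin.last (m+1)) j = ε * (if Fin.last (m+1) = j then 1 else 0) := by
    calc η.mat (Fin.last (m+1)) j = (ε*ε) * η.mat (Fin.last (m+1)) j := by rw [hε, one_mul]
    _ = ε * (ε * η.mat (Fin.last (m+1)) j) := by ring
    _ = _ := by rw [h]
  rw [h3]
  by_cases hj : j = Fin.last (m+1)
  · rw [if_pos hj, if_pos hj.symm, mul_one]
  · rw [if_neg hj, if_neg (fun hh => hj hh.symm), mul_zero]

lemma mulVec_apply' {d : ℕ} (M : Matrix (Fin d) (Fin d) ℝ) (v : Fin d → ℝ) (x : Fin d) :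
    M.mulVec v x = ∑ j, M x j * v j := rfl

lemma mulVec_last_of (η : SOg (m+2)) (ε : ℝ)
    (hrow : ∀ j, η.mat (Fin.last (m+1)) j = if j = Fin.last (m+1) then ε else 0)
    (v : Fin (m+2) → ℝ) :
    η.mat.mulVec v (Fin.last (m+1)) = ε * v (Fin.last (m+1)) := by
  rw [mulVec_apply', Finset.sum_eq_single (Fin.last (m+1))]
  · rw [hrow, if_pos rfl]
  · intro b _ hb; rw [hrow, if_neg hb, zero_mul]
  · intro hmem; exact absurd (Finset.mem_univ _) hmem

lemma key_phi (η : SOg (m+2)) (ε : ℝ) (hε : ε * ε = 1)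
    (hcol : ∀ i, η.mat i (Fin.last (m+1)) = if i = Fin.last (m+1) then ε else 0)
    (ξ : Sph (m+2)) (hne : eqpart ξ ≠ 0) (t : ℝ) :
    (∀ i : Fin (m+1), (rot η (phi t (ydir (rot η⁻¹ ξ)))).1 i.castSucc
        = Real.sin t * (‖eqpart ξ‖⁻¹ * ξ.1 i.castSucc))
    ∧ (rot η (phi t (ydir (rot η⁻¹ ξ)))).1 (Fin.last (m+1)) = ε * Real.cos t := by
  set ζ := rot η⁻¹ ξ with hζ
  have hrow := row_of η ε hcol hε
  have hrow_inv : ∀ j, (η⁻¹).mat (Fin.last (m+1)) j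
      = if j = Fin.last (m+1) then ε else 0 := by
    intro j; rw [inv_mat, Matrix.transpose_apply, hcol]
  have hζlast : ζ.1 (Fin.last (m+1)) = ε * ξ.1 (Fin.last (m+1)) := by
    rw [hζ, rot_val]; exact mulVec_last_of η⁻¹ ε hrow_inv ξ.1
  have hsq : ‖eqpart ζ‖ ^ 2 = ‖eqpart ξ‖ ^ 2 := by
    rw [norm_eqpart_sq, norm_eqpart_sq, hζlast]
    nlinarith [hε]
  have hnorm : ‖eqpart ζ‖ = ‖eqpart ξ‖ := by
    have h1 : ‖eqpart ζ‖ = Real.sqrt (‖eqpart ζ‖ ^ 2) := (Real.sqrt_sq (norm_nonneg _)).symm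
    rw [h1, hsq, Real.sqrt_sq (norm_nonneg _)]
  have hneζ : eqpart ζ ≠ 0 := by
    intro h0
    apply hne
    rw [← norm_eq_zero, ← hnorm, norm_eq_zero]
    exact h0
  have hAζ : η.mat.mulVec ζ.1 = ξ.1 := by
    have h1 := congrArg WithLp.ofLp (congrArg Subtype.val (rot_rot_inv η ξ))
    rw [rot_val] at h1
    exact h1
  constructor
  · intro i
    have hfull : ∑ l, η.mat i.castSucc l * ζ.1 l = ξ.1 i.castSucc := by
      rw [← mulVec_apply', hAζ]
    have hstep : ∑ l' : Fin (m+1), η.mat i.castSucc l'.castSucc * ζ.1 l'.castSucc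
        = ξ.1 i.castSucc := by
      rw [Fin.sum_univ_castSucc] at hfull
      rw [hcol, if_neg (Fin.castSucc_lt_last i).ne, zero_mul, add_zero] at hfull
      exact hfull
    have hLHS : (rot η (phi t (ydir ζ))).1 i.castSucc
        = ∑ l, η.mat i.castSucc l * (phi t (ydir ζ)).1 l := by
      rw [rot_val, mulVec_apply']
    rw [hLHS, Fin.sum_univ_castSucc, hcol, if_neg (Fin.castSucc_lt_last i).ne, zero_mul,
      add_zero]
    have hterm : ∀ l' : Fin (m+1),
        η.mat i.castSucc l'.castSucc * (phi t (ydir ζ)).1 l'.castSucc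
        = Real.sin t * ‖eqpart ξ‖⁻¹ * (η.mat i.castSucc l'.castSucc * ζ.1 l'.castSucc) := by
      intro l'
      rw [phi_cast, ydir_apply ζ hneζ, hnorm, eqpart_apply, smul_eq_mul]
      ring
    rw [Finset.sum_congr rfl (fun l' _ => hterm l'), ← Finset.mul_sum, hstep]
    ring
  · rw [rot_val, mulVec_last_of η ε hrow, phi_last]

lemma key1 (η : SOg (m+2))
    (hcol : ∀ i, η.mat i (Fin.last (m+1)) = if i = Fin.last (m+1) then (1:ℝ) else 0)
    (ξ : Sph (m+2)) (hne : eqpart ξ ≠ 0) (t : ℝ) :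
    rot η (phi t (ydir (rot η⁻¹ ξ))) = phi t (ydir ξ) := by
  obtain ⟨hc, hl⟩ := key_phi η 1 (by norm_num) hcol ξ hne t
  refine Subtype.ext (WithLp.ofLp_injective 2 (funext fun j => ?_))
  refine Fin.lastCases ?_ (fun i => ?_) j
  · rw [hl, phi_last, one_mul]
  · rw [hc, phi_cast, ydir_apply ξ hne, eqpart_apply, smul_eq_mul]

lemma key2 (η : SOg (m+2))
    (hcol : ∀ i, η.mat i (Fin.last (m+1)) = if i = Fin.last (m+1) then (-1:ℝ) else 0)
    (ξ : Sph (m+2)) (hne : eqpart ξ ≠ 0) (t : ℝ) :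
    rot η (phi t (ydir (rot η⁻¹ ξ))) = reflSph (phi t (ydir (reflSph ξ))) := by
  obtain ⟨hc, hl⟩ := key_phi η (-1) (by norm_num) hcol ξ hne t
  refine Subtype.ext (WithLp.ofLp_injective 2 (funext fun j => ?_))
  refine Fin.lastCases ?_ (fun i => ?_) j
  · rw [hl, refl_last, phi_last]; ring
  · rw [hc, refl_cast, phi_cast, ydir_congr (reflSph ξ) ξ (eqpart_refl ξ),
      ydir_apply ξ hne, eqpart_apply, smul_eq_mul]

end Aux

/-- `k = m + 1 ≥ 2`: conjugation of a latitudinal operator `L^#` by a rotation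
`η ∈ SO(k+1)` fixing (resp. flipping) the poles gives `L^#` (resp. `ρ^# ∘ L^# ∘ ρ^#`). -/
theorem conjugation_of_latitudinal_operator_by_rotation
    (m : ℕ) (hm : 1 ≤ m)
    (L : C(IccPi, ℝ) →L[ℝ] C(IccPi, ℝ))
    (hL : ∀ g : C(IccPi, ℝ), g loPt = 0 → g hiPt = 0 → L g loPt = 0 ∧ L g hiPt = 0)
    (η : SOg (m + 2)) :
    (rot η (npole (m + 1)) = npole (m + 1) →
      ∀ (f : C(Sph (m + 2), ℝ)) (ξ : Sph (m + 2)),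
        latOp L (f.comp (rotCM η)) (rot η⁻¹ ξ) = latOp L f ξ)
    ∧ (rot η (npole (m + 1)) = spole (m + 1) →
      ∀ (f : C(Sph (m + 2), ℝ)) (ξ : Sph (m + 2)),
        latOp L (f.comp (rotCM η)) (rot η⁻¹ ξ)
          = latOp L (f.comp reflSphCM) (reflSph ξ)) := by
  constructor
  · -- pole-fixing case
    intro hN f ξ
    have hcol : ∀ i, η.mat i (Fin.last (m+1)) = if i = Fin.last (m+1) then (1:ℝ) else 0 := by
      refine col_of η 1 ?_
      rw [hN, one_smul]
    have hrow_inv : ∀ j, (η⁻¹).mat (Fin.last (m+1)) j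
        = if j = Fin.last (m+1) then (1:ℝ) else 0 := by
      intro j; rw [inv_mat, Matrix.transpose_apply, hcol]
    have hζlast : (rot η⁻¹ ξ).1 (Fin.last (m+1)) = ξ.1 (Fin.last (m+1)) := by
      rw [rot_val, mulVec_last_of η⁻¹ 1 hrow_inv ξ.1, one_mul]
    have hlat : lat (rot η⁻¹ ξ) = lat ξ := by
      unfold lat; rw [hζlast]
    have hpt : (⟨lat (rot η⁻¹ ξ), lat_mem_Icc _⟩ : IccPi) = ⟨lat ξ, lat_mem_Icc ξ⟩ :=
      Subtype.ext hlat
    by_cases hne : eqpart ξ = 0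
    · -- pole case
      have hlast2 : ξ.1 (Fin.last (m+1)) = 1 ∨ ξ.1 (Fin.last (m+1)) = -1 := by
        have h := norm_eqpart_sq ξ
        rw [hne, norm_zero] at h
        have h2 : ξ.1 (Fin.last (m+1)) * ξ.1 (Fin.last (m+1)) = 1 := by nlinarith
        exact mul_self_eq_one_iff.mp h2
      have hS : rot η (spole (m+1)) = spole (m+1) := by
        refine Subtype.ext ?_
        rw [rot_neg_val η (npole (m+1)) (spole (m+1)) spole_val, hN, ← spole_val]
      set g1 := merid (f.comp (rotCM η)) (ydir (rot η⁻¹ ξ)) with hg1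
      set g2 := merid f (ydir ξ) with hg2
      have e0 : (g1 - g2) loPt = 0 := by
        rw [ContinuousMap.sub_apply]
        have h1 : g1 loPt = f (rot η (phi (0:ℝ) (ydir (rot η⁻¹ ξ)))) := rfl
        have h2 : g2 loPt = f (phi (0:ℝ) (ydir ξ)) := rfl
        rw [h1, h2, phi_zero, phi_zero, hN, sub_self]
      have eπ : (g1 - g2) hiPt = 0 := by
        rw [ContinuousMap.sub_apply]
        have h1 : g1 hiPt = f (rot η (phi π (ydir (rot η⁻¹ ξ)))) := rfl
        have h2 : g2 hiPt = f (phi π (ydir ξ)) := rfl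
        rw [h1, h2, phi_pi, phi_pi, hS, sub_self]
      obtain ⟨hq0, hqπ⟩ := hL (g1 - g2) e0 eπ
      rw [map_sub, ContinuousMap.sub_apply, sub_eq_zero] at hq0 hqπ
      unfold latOp
      rw [hpt]
      rcases hlast2 with h1 | h1
      · have hlo : (⟨lat ξ, lat_mem_Icc ξ⟩ : IccPi) = loPt := by
          refine Subtype.ext ?_
          show lat ξ = 0
          unfold lat; rw [h1, Real.arccos_one]
        rw [hlo]; exact hq0
      · have hhi : (⟨lat ξ, lat_mem_Icc ξ⟩ : IccPi) = hiPt := by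
          refine Subtype.ext ?_
          show lat ξ = π
          unfold lat; rw [h1, Real.arccos_neg_one]
        rw [hhi]; exact hqπ
    · -- non-pole case
      have hmerid : merid (f.comp (rotCM η)) (ydir (rot η⁻¹ ξ)) = merid f (ydir ξ) := by
        ext s
        show f (rot η (phi s.1 (ydir (rot η⁻¹ ξ)))) = f (phi s.1 (ydir ξ))
        exact congrArg f (key1 η hcol ξ hne s.1)
      unfold latOp
      rw [hmerid, hpt]
  · -- pole-flipping case
    intro hN f ξ
    have hcol : ∀ i, η.mat i (Fin.last (m+1)) = if i = Fin.last (m+1) then (-1:ℝ) else 0 := by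
      refine col_of η (-1) ?_
      rw [hN, spole_val]
      exact (neg_one_smul ℝ _).symm
    have hrow_inv : ∀ j, (η⁻¹).mat (Fin.last (m+1)) j
        = if j = Fin.last (m+1) then (-1:ℝ) else 0 := by
      intro j; rw [inv_mat, Matrix.transpose_apply, hcol]
    have hζlast : (rot η⁻¹ ξ).1 (Fin.last (m+1)) = -ξ.1 (Fin.last (m+1)) := by
      rw [rot_val, mulVec_last_of η⁻¹ (-1) hrow_inv ξ.1, neg_one_mul]
    have hlat : lat (rot η⁻¹ ξ) = lat (reflSph ξ) := by
      unfold lat; rw [hζlast, refl_last]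
    have hpt : (⟨lat (rot η⁻¹ ξ), lat_mem_Icc _⟩ : IccPi)
        = ⟨lat (reflSph ξ), lat_mem_Icc (reflSph ξ)⟩ := Subtype.ext hlat
    by_cases hne : eqpart ξ = 0
    · -- pole case
      have hlast2 : ξ.1 (Fin.last (m+1)) = 1 ∨ ξ.1 (Fin.last (m+1)) = -1 := by
        have h := norm_eqpart_sq ξ
        rw [hne, norm_zero] at h
        have h2 : ξ.1 (Fin.last (m+1)) * ξ.1 (Fin.last (m+1)) = 1 := by nlinarith
        exact mul_self_eq_one_iff.mp h2
      have hS : rot η (spole (m+1)) = npole (m+1) := by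
        refine Subtype.ext ?_
        rw [rot_neg_val η (npole (m+1)) (spole (m+1)) spole_val, hN, spole_val, neg_neg]
      set g1 := merid (f.comp (rotCM η)) (ydir (rot η⁻¹ ξ)) with hg1
      set g2 := merid (f.comp reflSphCM) (ydir (reflSph ξ)) with hg2
      have e0 : (g1 - g2) loPt = 0 := by
        rw [ContinuousMap.sub_apply]
        have h1 : g1 loPt = f (rot η (phi (0:ℝ) (ydir (rot η⁻¹ ξ)))) := rfl
        have h2 : g2 loPt = f (reflSph (phi (0:ℝ) (ydir (reflSph ξ)))) := rfl
        rw [h1, h2, phi_zero, phi_zero, hN, refl_npole, sub_self]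
      have eπ : (g1 - g2) hiPt = 0 := by
        rw [ContinuousMap.sub_apply]
        have h1 : g1 hiPt = f (rot η (phi π (ydir (rot η⁻¹ ξ)))) := rfl
        have h2 : g2 hiPt = f (reflSph (phi π (ydir (reflSph ξ)))) := rfl
        rw [h1, h2, phi_pi, phi_pi, hS, refl_spole, sub_self]
      obtain ⟨hq0, hqπ⟩ := hL (g1 - g2) e0 eπ
      rw [map_sub, ContinuousMap.sub_apply, sub_eq_zero] at hq0 hqπ
      unfold latOp
      rw [hpt]
      rcases hlast2 with h1 | h1
      · have hhi : (⟨lat (reflSph ξ), lat_mem_Icc (reflSph ξ)⟩ : IccPi) = hiPt := by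
          refine Subtype.ext ?_
          show lat (reflSph ξ) = π
          unfold lat; rw [refl_last, h1, Real.arccos_neg_one]
        rw [hhi]; exact hqπ
      · have hlo : (⟨lat (reflSph ξ), lat_mem_Icc (reflSph ξ)⟩ : IccPi) = loPt := by
          refine Subtype.ext ?_
          show lat (reflSph ξ) = 0
          unfold lat; rw [refl_last, h1, neg_neg, Real.arccos_one]
        rw [hlo]; exact hq0
    · -- non-pole case
      have hmerid : merid (f.comp (rotCM η)) (ydir (rot η⁻¹ ξ))
          = merid (f.comp reflSphCM) (ydir (reflSph ξ)) := by
        ext s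
        show f (rot η (phi s.1 (ydir (rot η⁻¹ ξ)))) = f (reflSph (phi s.1 (ydir (reflSph ξ))))
        exact congrArg f (key2 η hcol ξ hne s.1)
      unfold latOp
      rw [hmerid, hpt]

end
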